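/- Let ψ : [0, 1/2] → ℝ be continuous and define T_ψ : [0,1] → ℝ by T_ψ(λ) := ∑_{k=0}^∞ 2^{−k}·ψ(d_ℤ(2^k·λ)). Then T_ψ is continuous, and f = T_ψ is the unique continuous function f : [0,1] → ℝ satisfying f(0) = f(1) together with the functional equation: f(λ) = (1/2)·f(2λ) + ψ(λ) for λ ∈ [0, 1/2], and f(λ) = (1/2)·f(2λ − 1) + ψ(1 − λ) for λ ∈ (1/2, 1]. -/

import Mathlib

noncomputable section

/-- The distance of a real number to the set of integers. -/
noncomputable def dZ (x : ℝ) : ℝ := ⨅ k : ℤ, |x - (k : ℝ)|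

lemma dZ_bdd (x : ℝ) : BddBelow (Set.range fun k : ℤ => |x - (k : ℝ)|) :=
  ⟨0, by rintro y ⟨k, rfl⟩; exact abs_nonneg _⟩

lemma dZ_le (x : ℝ) (k : ℤ) : dZ x ≤ |x - (k : ℝ)| := ciInf_le (dZ_bdd x) k

lemma le_dZ {x c : ℝ} (h : ∀ k : ℤ, c ≤ |x - (k : ℝ)|) : c ≤ dZ x := le_ciInf h

lemma dZ_nonneg (x : ℝ) : 0 ≤ dZ x := le_dZ fun _ => abs_nonneg _

lemma dZ_le_half (x : ℝ) : dZ x ≤ 1 / 2 := (dZ_le x (round x)).trans (abs_sub_round x)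

lemma dZ_mem (x : ℝ) : dZ x ∈ Set.Icc (0:ℝ) (1/2) := ⟨dZ_nonneg x, dZ_le_half x⟩

lemma dZ_add_int (x : ℝ) (n : ℤ) : dZ (x + n) = dZ x := by
  apply le_antisymm
  · refine le_dZ fun k => ?_
    have h := dZ_le (x + n) (k + n)
    have e : x + (n:ℝ) - ((k + n : ℤ):ℝ) = x - k := by push_cast; ring
    rwa [e] at h
  · refine le_dZ fun k => ?_
    have h := dZ_le x (k - n)
    have e : x - ((k - n : ℤ):ℝ) = x + n - k := by push_cast; ring
    rwa [e] at h

lemma dZ_int (n : ℤ) : dZ (n : ℝ) = 0 :=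
  le_antisymm (by simpa using dZ_le (n:ℝ) n) (dZ_nonneg _)

lemma dZ_eq_self {x : ℝ} (hx : x ∈ Set.Icc (0:ℝ) (1/2)) : dZ x = x := by
  apply le_antisymm (by simpa [abs_of_nonneg hx.1] using dZ_le x 0)
  refine le_dZ fun k => ?_
  rcases le_or_gt ((k:ℝ)) 0 with h | h
  · rw [abs_of_nonneg (by linarith [hx.1])]; linarith
  · have hk0 : 0 < k := by exact_mod_cast h
    have hk : (1:ℝ) ≤ k := by exact_mod_cast hk0
    rw [abs_of_nonpos (by linarith [hx.2])]
    linarith [hx.2]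

lemma dZ_eq_one_sub {x : ℝ} (hx : x ∈ Set.Ioc (1/2:ℝ) 1) : dZ x = 1 - x := by
  apply le_antisymm
  · have h := dZ_le x 1
    have e : |x - ((1:ℤ):ℝ)| = 1 - x := by
      rw [abs_of_nonpos (by push_cast; linarith [hx.2])]; push_cast; ring
    rwa [e] at h
  · refine le_dZ fun k => ?_
    rcases le_or_gt ((k:ℝ)) (1/2) with h | h
    · have h1 : (k:ℝ) < 1 := lt_of_le_of_lt h (by norm_num)
      have h2 : k < 1 := by exact_mod_cast h1
      have h3 : k ≤ 0 := by omega
      have hk : (k:ℝ) ≤ 0 := by exact_mod_cast h3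
      rw [abs_of_nonneg (by linarith [hx.1])]
      linarith [hx.1]
    · have h1 : (1:ℝ)/2 < (k:ℝ) := h
      have h2 : 0 < k := by exact_mod_cast lt_trans (by norm_num : (0:ℝ) < 1/2) h1
      have hk : (1:ℝ) ≤ k := by exact_mod_cast h2
      rw [abs_of_nonpos (by linarith [hx.2])]
      linarith

lemma dZ_sub_le (x y : ℝ) : dZ x ≤ dZ y + |x - y| := by
  have h : dZ x - |x - y| ≤ dZ y := le_dZ fun k => by
    have h1 := dZ_le x k
    have h2 := abs_sub_le x y (k:ℝ)
    linarith
  linarith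

lemma dZ_continuous : Continuous dZ := by
  have : LipschitzWith 1 dZ := by
    refine LipschitzWith.of_dist_le_mul fun x y => ?_
    rw [NNReal.coe_one, one_mul, Real.dist_eq, Real.dist_eq, abs_sub_le_iff]
    constructor
    · have := dZ_sub_le x y; linarith
    · have := dZ_sub_le y x; rw [abs_sub_comm] at this; linarith
  exact this.continuous

/-- the Takagi-type function `T_ψ` is continuous and is the unique continuous
solution with `f(0)=f(1)` of the dyadic functional equation. -/
theorem stmt3 (ψ : ℝ → ℝ) (hc : ContinuousOn ψ (Set.Icc (0 : ℝ) (1 / 2)))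
    (T : ℝ → ℝ) (hT : ∀ l, T l = ∑' k : ℕ, (1 / 2 : ℝ) ^ k * ψ (dZ (2 ^ k * l))) :
    (ContinuousOn T (Set.Icc (0 : ℝ) 1) ∧ T 0 = T 1 ∧
      (∀ l ∈ Set.Icc (0 : ℝ) (1 / 2), T l = 2⁻¹ * T (2 * l) + ψ l) ∧
      (∀ l ∈ Set.Ioc (1 / 2 : ℝ) 1, T l = 2⁻¹ * T (2 * l - 1) + ψ (1 - l))) ∧
    (∀ f : ℝ → ℝ, ContinuousOn f (Set.Icc (0 : ℝ) 1) → f 0 = f 1 →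
      (∀ l ∈ Set.Icc (0 : ℝ) (1 / 2), f l = 2⁻¹ * f (2 * l) + ψ l) →
      (∀ l ∈ Set.Ioc (1 / 2 : ℝ) 1, f l = 2⁻¹ * f (2 * l - 1) + ψ (1 - l)) →
      Set.EqOn f T (Set.Icc (0 : ℝ) 1)) := by
  obtain ⟨C, hC⟩ := isCompact_Icc.exists_bound_of_continuousOn hc
  have hψbound : ∀ x : ℝ, |ψ (dZ x)| ≤ C := fun x => hC _ (dZ_mem x)
  have hgeo : Summable (fun k : ℕ => C * (1/2:ℝ)^k) :=
    (summable_geometric_of_lt_one (by norm_num) (by norm_num)).mul_left C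
  have hbd : ∀ (l : ℝ) (k : ℕ), ‖(1/2:ℝ)^k * ψ (dZ (2^k * l))‖ ≤ C * (1/2)^k := by
    intro l k
    rw [Real.norm_eq_abs, abs_mul, abs_of_nonneg (by positivity : (0:ℝ) ≤ (1/2:ℝ)^k)]
    calc (1/2:ℝ)^k * |ψ (dZ (2^k*l))|
        ≤ (1/2:ℝ)^k * C := mul_le_mul_of_nonneg_left (hψbound _) (by positivity)
      _ = C * (1/2)^k := mul_comm _ _
  have hsum : ∀ l : ℝ, Summable (fun k : ℕ => (1/2:ℝ)^k * ψ (dZ (2^k * l))) := fun l =>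
    Summable.of_norm_bounded hgeo (hbd l)
  have hψdZ : Continuous (fun x => ψ (dZ x)) := hc.comp_continuous dZ_continuous dZ_mem
  have hTcont : Continuous T := by
    have hTe : T = fun l => ∑' k : ℕ, (1/2:ℝ)^k * ψ (dZ (2^k * l)) := funext hT
    rw [hTe]
    refine continuous_tsum (fun k => ?_) hgeo (fun k l => hbd l k)
    exact continuous_const.mul (hψdZ.comp (continuous_const.mul continuous_id))
  have hrec : ∀ l : ℝ, T l = ψ (dZ l) + 2⁻¹ * T (2 * l) := by
    intro l
    rw [hT l, Summable.tsum_eq_zero_add (hsum l)]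
    have e0 : (1/2:ℝ)^(0:ℕ) * ψ (dZ (2^(0:ℕ) * l)) = ψ (dZ l) := by norm_num
    rw [e0]
    congr 1
    rw [hT (2*l), ← tsum_mul_left]
    refine tsum_congr fun k => ?_
    have e : (2:ℝ)^(k+1) * l = 2^k * (2*l) := by ring
    rw [e]; ring
  have eq1 : ∀ l ∈ Set.Icc (0:ℝ) (1/2), T l = 2⁻¹ * T (2*l) + ψ l := by
    intro l hl
    rw [hrec l, dZ_eq_self hl]; ring
  have eq2 : ∀ l ∈ Set.Ioc (1/2:ℝ) 1, T l = 2⁻¹ * T (2*l - 1) + ψ (1 - l) := by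
    intro l hl
    have hTT : T (2*l) = T (2*l - 1) := by
      rw [hT, hT]
      refine tsum_congr fun k => ?_
      congr 1
      have e : (2:ℝ)^k * (2*l) = (2^k * (2*l-1)) + ((2^k : ℤ) : ℝ) := by push_cast; ring
      rw [e, dZ_add_int]
    rw [hrec l, dZ_eq_one_sub hl, hTT]; ring
  have hT01 : T 0 = T 1 := by
    rw [hT 0, hT 1]
    refine tsum_congr fun k => ?_
    have h0 : dZ ((2:ℝ)^k * 0) = 0 := by
      rw [mul_zero]; simpa using dZ_int 0
    have h1 : dZ ((2:ℝ)^k * 1) = 0 := by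
      rw [mul_one]
      have := dZ_int ((2:ℤ)^k)
      push_cast at this
      exact this
    rw [h0, h1]
  refine ⟨⟨hTcont.continuousOn, hT01, eq1, eq2⟩, ?_⟩
  intro f hf _ he1 he2
  have hgc : ContinuousOn (fun x => |f x - T x|) (Set.Icc (0:ℝ) 1) :=
    (hf.sub hTcont.continuousOn).abs
  obtain ⟨x₀, hx₀, hmax⟩ := isCompact_Icc.exists_isMaxOn
    (Set.nonempty_Icc.mpr (by norm_num)) hgc
  have hmax' : ∀ y ∈ Set.Icc (0:ℝ) 1, |f y - T y| ≤ |f x₀ - T x₀| := fun y hy => hmax hy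
  have key : |f x₀ - T x₀| ≤ 2⁻¹ * |f x₀ - T x₀| := by
    rcases le_or_gt x₀ (1/2) with h | h
    · have hmem : x₀ ∈ Set.Icc (0:ℝ) (1/2) := ⟨hx₀.1, h⟩
      have e : f x₀ - T x₀ = 2⁻¹ * (f (2*x₀) - T (2*x₀)) := by
        rw [he1 x₀ hmem, eq1 x₀ hmem]; ring
      have h2 : (2*x₀) ∈ Set.Icc (0:ℝ) 1 := ⟨by linarith [hx₀.1], by linarith⟩
      calc |f x₀ - T x₀| = 2⁻¹ * |f (2*x₀) - T (2*x₀)| := by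
            rw [e, abs_mul, abs_of_nonneg (by norm_num : (0:ℝ) ≤ 2⁻¹)]
        _ ≤ 2⁻¹ * |f x₀ - T x₀| := mul_le_mul_of_nonneg_left (hmax' _ h2) (by norm_num)
    · have hmem : x₀ ∈ Set.Ioc (1/2:ℝ) 1 := ⟨h, hx₀.2⟩
      have e : f x₀ - T x₀ = 2⁻¹ * (f (2*x₀-1) - T (2*x₀-1)) := by
        rw [he2 x₀ hmem, eq2 x₀ hmem]; ring
      have h2 : (2*x₀-1) ∈ Set.Icc (0:ℝ) 1 := ⟨by linarith, by linarith [hx₀.2]⟩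
      calc |f x₀ - T x₀| = 2⁻¹ * |f (2*x₀-1) - T (2*x₀-1)| := by
            rw [e, abs_mul, abs_of_nonneg (by norm_num : (0:ℝ) ≤ 2⁻¹)]
        _ ≤ 2⁻¹ * |f x₀ - T x₀| := mul_le_mul_of_nonneg_left (hmax' _ h2) (by norm_num)
  have hz : |f x₀ - T x₀| = 0 :=
    le_antisymm (by linarith) (abs_nonneg _)
  intro y hy
  have h1 : |f y - T y| ≤ 0 := hz ▸ hmax' y hy
  have h2 : f y - T y = 0 := abs_nonpos_iff.mp h1
  exact sub_eq_zero.mp h2
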